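/- Let M be a real 3×3 matrix with det M < 0, and let μ₁ ≥ μ₂ ≥ μ₃ > 0 be the eigenvalues of Mᵗ·M. Then Tr(R·M) ≤ √μ₁ + √μ₂ − √μ₃ for every R ∈ SO(3), and there exists R ∈ SO(3) for which equality holds; i.e. the maximum of τ_M over SO(3) equals √μ₁ + √μ₂ − √μ₃. -/

import Mathlib

open Matrix Polynomial

section Helpers

lemma dot_self_nonneg' (x : Fin 3 → ℝ) : 0 ≤ x ⬝ᵥ x :=
  Finset.sum_nonneg fun i _ => mul_self_nonneg (x i)

lemma mulVec_dot' {Q : Matrix (Fin 3) (Fin 3) ℝ} (x y : Fin 3 → ℝ) :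
    (Q *ᵥ x) ⬝ᵥ y = x ⬝ᵥ (Qᵀ *ᵥ y) := by
  rw [mulVec_transpose, dotProduct_comm (Q *ᵥ x) y, dotProduct_mulVec, dotProduct_comm]

lemma mulVec_dot_mulVec' {Q : Matrix (Fin 3) (Fin 3) ℝ} (hQ : Qᵀ * Q = 1)
    (x y : Fin 3 → ℝ) : (Q *ᵥ x) ⬝ᵥ (Q *ᵥ y) = x ⬝ᵥ y := by
  rw [mulVec_dot', mulVec_mulVec, hQ, one_mulVec]

lemma entry_le' {Q : Matrix (Fin 3) (Fin 3) ℝ} (hQ : Qᵀ * Q = 1) (i : Fin 3) :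
    -1 ≤ Q i i ∧ Q i i ≤ 1 := by
  have h := congrFun (congrFun hQ i) i
  simp only [Matrix.mul_apply, Matrix.one_apply_eq, Matrix.transpose_apply] at h
  have h2 : Q i i * Q i i ≤ 1 := by
    rw [← h]
    exact Finset.single_le_sum (fun j _ => mul_self_nonneg (Q j i)) (Finset.mem_univ i)
  constructor <;> nlinarith

lemma trace_le_one' {Q : Matrix (Fin 3) (Fin 3) ℝ} (hQ : Qᵀ * Q = 1)
    (hd : Q.det = -1) : Q 0 0 + Q 1 1 + Q 2 2 ≤ 1 := by
  have hdet0 : (1 + Q).det = 0 := by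
    have h1 : (1 + Q).det = (Qᵀ + 1).det * Q.det := by
      rw [← Matrix.det_mul, add_mul, hQ, one_mul]
    have h2 : (Qᵀ + 1).det = (1 + Q).det := by
      rw [← Matrix.det_transpose (Qᵀ + 1)]
      congr 1
      rw [Matrix.transpose_add, Matrix.transpose_transpose, Matrix.transpose_one, add_comm]
    rw [h2, hd] at h1
    linarith
  obtain ⟨v, hv0, hv⟩ := Matrix.exists_mulVec_eq_zero_iff.mpr hdet0
  rw [Matrix.add_mulVec, Matrix.one_mulVec] at hv
  have hQv : Q *ᵥ v = -v := by linear_combination (norm := module) hv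
  have hvv : 0 < v ⬝ᵥ v := by
    rcases lt_or_eq_of_le (dot_self_nonneg' v) with h | h
    · exact h
    · exact absurd ((dotProduct_self_eq_zero).mp h.symm) hv0
  set t : ℝ := Real.sqrt (v ⬝ᵥ v) with ht
  have htpos : 0 < t := Real.sqrt_pos.mpr hvv
  set u : Fin 3 → ℝ := t⁻¹ • v with hu
  have huu : u ⬝ᵥ u = 1 := by
    rw [hu, smul_dotProduct, dotProduct_smul, smul_eq_mul, smul_eq_mul,
      ← mul_assoc, ht]
    rw [← Real.sqrt_inv, Real.mul_self_sqrt (by positivity)]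
    exact inv_mul_cancel₀ (ne_of_gt hvv)
  have hQu : Q *ᵥ u = -u := by
    rw [hu, Matrix.mulVec_smul, hQv, smul_neg]
  have hQtu : Qᵀ *ᵥ u = -u := by
    have h1 : Qᵀ *ᵥ (Q *ᵥ u) = u := by
      rw [Matrix.mulVec_mulVec, hQ, Matrix.one_mulVec]
    rw [hQu, Matrix.mulVec_neg] at h1
    linear_combination (norm := module) -h1
  have key : ∀ i, Q i i ≤ 1 - 2 * (u i * u i) := by
    intro i
    set c : ℝ := u i with hc
    set ei : Fin 3 → ℝ := Pi.single i 1 with hei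
    have hQii : ei ⬝ᵥ (Q *ᵥ ei) = Q i i := by
      simp [hei, Matrix.mulVec_single, single_dotProduct]
    have huei : u ⬝ᵥ ei = c := by rw [hei, dotProduct_single, mul_one]
    have heiu : ei ⬝ᵥ u = c := by rw [hei, single_dotProduct, one_mul]
    have heie : ei ⬝ᵥ ei = 1 := by
      rw [hei, single_dotProduct, one_mul, Pi.single_eq_same]
    have huQei : u ⬝ᵥ (Q *ᵥ ei) = -c := by
      rw [dotProduct_comm, mulVec_dot', hQtu, dotProduct_neg, heiu]
    have hQeiei : (Q *ᵥ ei) ⬝ᵥ ei = Q i i := by rw [dotProduct_comm, hQii]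
    set w : Fin 3 → ℝ := ei - c • u with hw
    have hQw : Q *ᵥ w = Q *ᵥ ei + c • u := by
      rw [hw, Matrix.mulVec_sub, Matrix.mulVec_smul, hQu, smul_neg, sub_neg_eq_add]
    have hQww : (Q *ᵥ w) ⬝ᵥ w = Q i i + c * c := by
      rw [hQw, hw]
      simp only [add_dotProduct, dotProduct_sub, smul_dotProduct,
        dotProduct_smul, smul_eq_mul, hQeiei, huei, heiu, huu, huQei]
      have : (Q *ᵥ ei) ⬝ᵥ u = -c := by rw [dotProduct_comm, huQei]
      rw [this]; ring
    have hww : w ⬝ᵥ w = 1 - c * c := by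
      rw [hw]
      simp only [sub_dotProduct, dotProduct_sub, smul_dotProduct,
        dotProduct_smul, smul_eq_mul, heie, huei, heiu, huu]
      ring
    have hQwQw : (Q *ᵥ w) ⬝ᵥ (Q *ᵥ w) = 1 - c * c := by
      rw [mulVec_dot_mulVec' hQ, hww]
    have hcs : (Q *ᵥ w) ⬝ᵥ w ≤ w ⬝ᵥ w := by
      have h0 := dot_self_nonneg' (Q *ᵥ w - w)
      simp only [sub_dotProduct, dotProduct_sub] at h0
      have hsym : w ⬝ᵥ (Q *ᵥ w) = (Q *ᵥ w) ⬝ᵥ w := dotProduct_comm _ _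
      rw [hQwQw, hsym] at h0
      linarith [hww]
    rw [hQww, hww] at hcs
    linarith
  have husq : u 0 * u 0 + u 1 * u 1 + u 2 * u 2 = 1 := by
    rw [← huu]; simp [dotProduct, Fin.sum_univ_three]
  have k0 := key 0; have k1 := key 1; have k2 := key 2
  linarith

lemma charpoly_orth_conj' {n : Type*} [DecidableEq n] [Fintype n]
    (V A : Matrix n n ℝ) (h1 : V * Vᵀ = 1) :
    (V * A * Vᵀ).charpoly = A.charpoly := by
  have h1' : (V.map C) * (Vᵀ.map C) = 1 := by
    rw [← Matrix.map_mul, h1]; simp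
  unfold Matrix.charpoly
  have key : charmatrix (V * A * Vᵀ) =
      (V.map C) * charmatrix A * (Vᵀ.map C) := by
    unfold charmatrix
    rw [mul_sub, sub_mul]
    congr 1
    · rw [← (Matrix.scalar_commute (X : ℝ[X]) (Commute.all X) (V.map C)).eq, mul_assoc, h1',
        mul_one]
    · simp only [RingHom.mapMatrix_apply, ← Matrix.map_mul]
  rw [key, Matrix.det_mul, Matrix.det_mul, mul_comm, ← mul_assoc, ← Matrix.det_mul,
    mul_eq_one_comm.mp h1', Matrix.det_one, one_mul]

lemma prod3' (p q r : ℝ) : (Multiset.map (fun t => X - C t) ({p,q,r} : Multiset ℝ)).prod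
    = (X - C p) * (X - C q) * (X - C r) := by
  simp [Multiset.insert_eq_cons]
  ring

lemma roots3' {a b c x y z : ℝ}
    (h : (X - C a) * (X - C b) * (X - C c) = (X - C x) * (X - C y) * (X - C z)) :
    ({a, b, c} : Multiset ℝ) = {x, y, z} := by
  rw [← roots_multiset_prod_X_sub_C ({a,b,c} : Multiset ℝ),
    ← roots_multiset_prod_X_sub_C ({x,y,z} : Multiset ℝ), prod3', prod3', h]

lemma min3_le' {a b c t : ℝ} (ht : t ∈ ({a,b,c} : Multiset ℝ)) : min a (min b c) ≤ t := by
  simp only [Multiset.insert_eq_cons, Multiset.mem_cons, Multiset.mem_singleton] at ht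
  rcases ht with rfl | rfl | rfl
  · exact min_le_left _ _
  · exact le_trans (min_le_right _ _) (min_le_left _ _)
  · exact le_trans (min_le_right _ _) (min_le_right _ _)

lemma min3_mem' (a b c : ℝ) : min a (min b c) ∈ ({a,b,c} : Multiset ℝ) := by
  rcases min_cases a (min b c) with ⟨h1, _⟩ | ⟨h1, _⟩
  · rw [h1]; simp
  · rcases min_cases b c with ⟨h2, _⟩ | ⟨h2, _⟩ <;> rw [h1, h2] <;> simp

lemma min3_eq' {a b c x y z : ℝ} (h : ({a,b,c} : Multiset ℝ) = {x,y,z}) :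
    min a (min b c) = min x (min y z) := by
  apply le_antisymm
  · exact min3_le' (h ▸ min3_mem' x y z)
  · exact min3_le' (h.symm ▸ min3_mem' a b c)

lemma sum3_eq' {a b c x y z : ℝ} (h : ({a,b,c} : Multiset ℝ) = {x,y,z}) :
    a + b + c = x + y + z := by
  have := congrArg Multiset.sum h
  simp [Multiset.insert_eq_cons] at this
  linarith

lemma map3' {a b c x y z : ℝ} (h : ({a,b,c} : Multiset ℝ) = {x,y,z}) (f : ℝ → ℝ) :
    ({f a, f b, f c} : Multiset ℝ) = {f x, f y, f z} := by
  have := congrArg (Multiset.map f) h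
  simpa [Multiset.insert_eq_cons] using this

end Helpers

/-- For det M < 0, the maximum of τ_M over SO(3) is √μ₁ + √μ₂ − √μ₃. -/
theorem max_tauM_det_neg (M : Matrix (Fin 3) (Fin 3) ℝ) (hM : M.det < 0)
    (μ₁ μ₂ μ₃ : ℝ) (hμ : μ₁ ≥ μ₂ ∧ μ₂ ≥ μ₃ ∧ μ₃ > 0)
    (hchar : (Mᵀ * M).charpoly = (X - C μ₁) * (X - C μ₂) * (X - C μ₃)) :
    (∀ R : Matrix (Fin 3) (Fin 3) ℝ, Rᵀ * R = 1 → R.det = 1 →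
      Matrix.trace (R * M) ≤ Real.sqrt μ₁ + Real.sqrt μ₂ - Real.sqrt μ₃) ∧
    (∃ R : Matrix (Fin 3) (Fin 3) ℝ, Rᵀ * R = 1 ∧ R.det = 1 ∧
      Matrix.trace (R * M) = Real.sqrt μ₁ + Real.sqrt μ₂ - Real.sqrt μ₃) := by
  obtain ⟨hμ12, hμ23, hμ3⟩ := hμ
  -- spectral decomposition of Mᵀ M
  have hA : (Mᵀ * M).IsHermitian := by
    simpa using Matrix.isHermitian_conjTranspose_mul_self M
  obtain ⟨V, e, hVtV, hVVt, hspec⟩ :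
      ∃ (V : Matrix (Fin 3) (Fin 3) ℝ) (e : Fin 3 → ℝ),
        Vᵀ * V = 1 ∧ V * Vᵀ = 1 ∧ Mᵀ * M = V * diagonal e * Vᵀ := by
    refine ⟨hA.eigenvectorUnitary, hA.eigenvalues, ?_, ?_, ?_⟩
    · have := Unitary.coe_star_mul_self hA.eigenvectorUnitary
      rwa [Matrix.star_eq_conjTranspose, Matrix.conjTranspose_eq_transpose_of_trivial] at this
    · have := Unitary.coe_mul_star_self hA.eigenvectorUnitary
      rwa [Unitary.coe_star, Matrix.star_eq_conjTranspose,
        Matrix.conjTranspose_eq_transpose_of_trivial] at this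
    · have h := hA.spectral_theorem
      rw [Unitary.conjStarAlgAut_apply, Matrix.star_eq_conjTranspose, Matrix.conjTranspose_eq_transpose_of_trivial] at h
      exact h
  -- eigenvalue multiset
  have hcp2 : (diagonal e).charpoly = (X - C (e 0)) * (X - C (e 1)) * (X - C (e 2)) := by
    rw [Matrix.charpoly_of_upperTriangular _ (Matrix.blockTriangular_diagonal e),
      Fin.prod_univ_three]
    simp [Matrix.diagonal_apply_eq]
  have hmul : ({e 0, e 1, e 2} : Multiset ℝ) = {μ₁, μ₂, μ₃} := by
    apply roots3'
    rw [← hcp2, ← charpoly_orth_conj' V (diagonal e) hVVt, ← hspec, hchar]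
  have hepos : ∀ i, 0 < e i := by
    intro i
    have hi : e i ∈ ({e 0, e 1, e 2} : Multiset ℝ) := by fin_cases i <;> simp
    rw [hmul] at hi
    simp only [Multiset.insert_eq_cons, Multiset.mem_cons, Multiset.mem_singleton] at hi
    rcases hi with rfl | rfl | rfl <;> linarith
  set s : Fin 3 → ℝ := fun i => Real.sqrt (e i) with hs
  have hspos : ∀ i, 0 < s i := fun i => Real.sqrt_pos.mpr (hepos i)
  have hssq : ∀ i, s i * s i = e i := fun i => Real.mul_self_sqrt (le_of_lt (hepos i))
  have hmuls : ({s 0, s 1, s 2} : Multiset ℝ) =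
      {Real.sqrt μ₁, Real.sqrt μ₂, Real.sqrt μ₃} := map3' hmul Real.sqrt
  have hsum : s 0 + s 1 + s 2 = Real.sqrt μ₁ + Real.sqrt μ₂ + Real.sqrt μ₃ := sum3_eq' hmuls
  have hmin : min (s 0) (min (s 1) (s 2)) = Real.sqrt μ₃ := by
    rw [min3_eq' hmuls, min_eq_right (Real.sqrt_le_sqrt hμ23),
      min_eq_right (Real.sqrt_le_sqrt (le_trans hμ23 hμ12))]
  -- SVD
  obtain ⟨S, hS⟩ : ∃ S : Matrix (Fin 3) (Fin 3) ℝ, S = diagonal s := ⟨_, rfl⟩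
  obtain ⟨Si, hSi⟩ : ∃ Si : Matrix (Fin 3) (Fin 3) ℝ, Si = diagonal (fun i => (s i)⁻¹) :=
    ⟨_, rfl⟩
  obtain ⟨W, hW⟩ : ∃ W : Matrix (Fin 3) (Fin 3) ℝ, W = M * V * Si := ⟨_, rfl⟩
  have hVAV : Vᵀ * (Mᵀ * M) * V = diagonal e := by
    rw [hspec]
    simp only [mul_assoc]
    rw [hVtV, mul_one, ← mul_assoc, hVtV, one_mul]
  have hWtW : Wᵀ * W = 1 := by
    have ht : Wᵀ = Si * (Vᵀ * Mᵀ) := by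
      rw [hW, Matrix.transpose_mul, Matrix.transpose_mul, hSi, Matrix.diagonal_transpose]
    rw [ht, hW]
    have : Si * (Vᵀ * Mᵀ) * (M * V * Si) = Si * (Vᵀ * (Mᵀ * M) * V) * Si := by
      simp only [mul_assoc]
    rw [this, hVAV, hSi, Matrix.diagonal_mul_diagonal, Matrix.diagonal_mul_diagonal]
    rw [show (fun i => (s i)⁻¹ * e i * (s i)⁻¹) = fun _ => (1:ℝ) from funext fun i => by
      rw [← hssq i]; field_simp [ne_of_gt (hspos i)]]
    exact Matrix.diagonal_one
  have hWWt : W * Wᵀ = 1 := mul_eq_one_comm.mp hWtW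
  have hMV : M = W * S * Vᵀ := by
    have h1 : W * S = M * V := by
      rw [hW, mul_assoc, hSi, hS, Matrix.diagonal_mul_diagonal]
      rw [show (fun i => (s i)⁻¹ * s i) = fun _ => (1:ℝ) from funext fun i =>
        inv_mul_cancel₀ (ne_of_gt (hspos i))]
      rw [Matrix.diagonal_one, mul_one]
    rw [h1, mul_assoc, hVVt, mul_one]
  have hdetS : S.det = s 0 * s 1 * s 2 := by
    rw [hS, Matrix.det_diagonal, Fin.prod_univ_three]
  have hdetSpos : 0 < S.det := by rw [hdetS]; exact mul_pos (mul_pos (hspos 0) (hspos 1)) (hspos 2)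
  have hV2 : V.det * V.det = 1 := by
    have := congrArg Matrix.det hVtV
    rwa [Matrix.det_mul, Matrix.det_transpose, Matrix.det_one] at this
  have hW2 : W.det * W.det = 1 := by
    have := congrArg Matrix.det hWtW
    rwa [Matrix.det_mul, Matrix.det_transpose, Matrix.det_one] at this
  have hWV : W.det * V.det = -1 := by
    have hdm : M.det = W.det * S.det * V.det := by
      rw [hMV, Matrix.det_mul, Matrix.det_mul, Matrix.det_transpose]
    have h1 : W.det * V.det * S.det < 0 := by nlinarith [hM, hdm]
    have h2 : W.det * V.det < 0 := by
      by_contra h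
      push_neg at h
      nlinarith
    nlinarith
  constructor
  · -- upper bound
    intro R hR hdR
    obtain ⟨Q, hQdef⟩ : ∃ Q : Matrix (Fin 3) (Fin 3) ℝ, Q = Vᵀ * R * W := ⟨_, rfl⟩
    have hQ : Qᵀ * Q = 1 := by
      have ht : Qᵀ = Wᵀ * (Rᵀ * V) := by
        rw [hQdef, Matrix.transpose_mul, Matrix.transpose_mul, Matrix.transpose_transpose]
      rw [ht, hQdef]
      have : Wᵀ * (Rᵀ * V) * (Vᵀ * R * W) = Wᵀ * (Rᵀ * ((V * Vᵀ) * R) * W) := by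
        simp only [mul_assoc]
      rw [this, hVVt, one_mul, hR, one_mul, hWtW]
    have hdQ : Q.det = -1 := by
      rw [hQdef, Matrix.det_mul, Matrix.det_mul, Matrix.det_transpose, hdR, mul_one]
      rw [mul_comm]; exact hWV
    have htr : Matrix.trace (R * M) = Q 0 0 * s 0 + Q 1 1 * s 1 + Q 2 2 * s 2 := by
      rw [hMV]
      have h1 : R * (W * S * Vᵀ) = (R * W * S) * Vᵀ := by simp only [mul_assoc]
      rw [h1, Matrix.trace_mul_comm]
      have h2 : Vᵀ * (R * W * S) = Q * S := by rw [hQdef]; simp only [mul_assoc]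
      rw [h2, hS]
      simp only [Matrix.trace, Matrix.diag, Matrix.mul_diagonal]
      rw [Fin.sum_univ_three]
    rw [htr]
    have hm0 : (0:ℝ) ≤ Real.sqrt μ₃ := Real.sqrt_nonneg _
    have hm1 : Real.sqrt μ₃ ≤ s 0 := hmin ▸ min_le_left _ _
    have hm2 : Real.sqrt μ₃ ≤ s 1 := hmin ▸ le_trans (min_le_right _ _) (min_le_left _ _)
    have hm3 : Real.sqrt μ₃ ≤ s 2 := hmin ▸ le_trans (min_le_right _ _) (min_le_right _ _)
    have hq0 := entry_le' hQ 0
    have hq1 := entry_le' hQ 1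
    have hq2 := entry_le' hQ 2
    have htr1 := trace_le_one' hQ hdQ
    nlinarith [mul_nonneg (sub_nonneg.mpr hq0.2) (sub_nonneg.mpr hm1),
      mul_nonneg (sub_nonneg.mpr hq1.2) (sub_nonneg.mpr hm2),
      mul_nonneg (sub_nonneg.mpr hq2.2) (sub_nonneg.mpr hm3),
      mul_nonneg (sub_nonneg.mpr htr1) hm0, hsum]
  · -- existence
    obtain ⟨j, hj⟩ : ∃ j, s j = Real.sqrt μ₃ := by
      rcases min_cases (s 0) (min (s 1) (s 2)) with ⟨h1, _⟩ | ⟨h1, _⟩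
      · exact ⟨0, by rw [← hmin, h1]⟩
      · rcases min_cases (s 1) (s 2) with ⟨h2, _⟩ | ⟨h2, _⟩
        · exact ⟨1, by rw [← hmin, h1, h2]⟩
        · exact ⟨2, by rw [← hmin, h1, h2]⟩
    obtain ⟨q, hq⟩ : ∃ q : Fin 3 → ℝ, q = fun i => if i = j then (-1:ℝ) else 1 := ⟨_, rfl⟩
    obtain ⟨D, hD⟩ : ∃ D : Matrix (Fin 3) (Fin 3) ℝ, D = diagonal q := ⟨_, rfl⟩
    have hDt : Dᵀ = D := by rw [hD, Matrix.diagonal_transpose]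
    have hDD : D * D = 1 := by
      rw [hD, Matrix.diagonal_mul_diagonal]
      rw [show (fun i => q i * q i) = fun _ => (1:ℝ) from funext fun i => by
        by_cases h : i = j <;> simp [hq, h]]
      exact Matrix.diagonal_one
    have hdD : D.det = -1 := by
      rw [hD, Matrix.det_diagonal, hq]
      rw [Finset.prod_ite_eq' Finset.univ j (fun _ => (-1:ℝ))]
      simp
    refine ⟨V * D * Wᵀ, ?_, ?_, ?_⟩
    · have ht : (V * D * Wᵀ)ᵀ = W * (Dᵀ * Vᵀ) := by
        rw [Matrix.transpose_mul, Matrix.transpose_mul, Matrix.transpose_transpose]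
      rw [ht, hDt]
      have : W * (D * Vᵀ) * (V * D * Wᵀ) = W * (D * ((Vᵀ * V) * D) * Wᵀ) := by
        simp only [mul_assoc]
      rw [this, hVtV, one_mul, hDD, one_mul, hWWt]
    · rw [Matrix.det_mul, Matrix.det_mul, Matrix.det_transpose, hdD]
      linear_combination -hWV
    · have h1 : V * D * Wᵀ * M = V * (D * S) * Vᵀ := by
        rw [hMV]
        have : V * D * Wᵀ * (W * S * Vᵀ) = V * (D * ((Wᵀ * W) * S)) * Vᵀ := by
          simp only [mul_assoc]
        rw [this, hWtW, one_mul]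
      rw [h1, Matrix.trace_mul_comm]
      have h2 : Vᵀ * (V * (D * S)) = D * S := by
        rw [← mul_assoc, hVtV, one_mul]
      rw [h2, hD, hS, Matrix.diagonal_mul_diagonal, Matrix.trace_diagonal]
      have hsplit : ∀ i : Fin 3, q i * s i = s i - 2 * (if i = j then s i else 0) := by
        intro i
        by_cases h : i = j
        · simp [hq, h]; ring
        · simp [hq, h]
      rw [Finset.sum_congr rfl fun i _ => hsplit i]
      rw [Finset.sum_sub_distrib, ← Finset.mul_sum, Finset.sum_ite_eq' Finset.univ j s]
      simp only [Finset.mem_univ, if_true]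
      rw [Fin.sum_univ_three, hj]
      linarith [hsum]
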